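/- Let n, p ≥ 1 be integers with n ≥ p+1, let i be an integer with 0 ≤ i ≤ n-1-p, and let J ⊆ [n-1] be a subset satisfying {i+1, …, i+p+1} ∩ J = ∅ and i ∈ J ∪ {0}. Then Σ_{I ⊆ {i+1,…,i+p}} (-1)^{|I|} L^{(ρ_p)}_{n, I ∪ J} = 0 in ℂ[[x_1,x_2,…]]. -/

import Mathlib

open Finset
open scoped Classical

namespace ExtPeaks

/-- `fget g j` is the `j`-th entry (1-indexed) of the sequence `g : Fin n → ℕ`,
so `fget g j = g ⟨j - 1, _⟩` for `1 ≤ j ≤ n`. -/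
def fget {n : ℕ} (g : Fin n → ℕ) (j : ℕ) : ℕ :=
  if h : j - 1 < n then g ⟨j - 1, h⟩ else 0

/-- `Peak(I) = {i ∈ I : i ≥ 2 and i - 1 ∉ I}`. -/
def peakOf (I : Finset ℕ) : Finset ℕ :=
  I.filter fun i => 2 ≤ i ∧ i - 1 ∉ I

/-- The monomial `x_{i_1} ⋯ x_{i_n}` attached to a sequence `g`, as a `Finsupp`. -/
noncomputable def monomialOf {n : ℕ} (g : Fin n → ℕ) : ℕ →₀ ℕ :=
  ∑ j, Finsupp.single (g j) 1

/-- The (finitely many) weakly increasing sequences of positive integers of length `n`,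
satisfying the peak condition `i_{j-1} < i_{j+1}` for `j ∈ Peak(I)`, with monomial `d`. -/
noncomputable def Lseqs (n : ℕ) (I : Finset ℕ) (d : ℕ →₀ ℕ) : Finset (Fin n → ℕ) :=
  (Fintype.piFinset fun _ => d.support).filter fun g =>
    (∀ j k : Fin n, j ≤ k → g j ≤ g k) ∧ (∀ j, 1 ≤ g j) ∧
    (∀ j ∈ peakOf I, fget g (j - 1) < fget g (j + 1)) ∧ monomialOf g = d

/-- The `q`-fundamental quasisymmetric function `L^{(q)}_{n,I}`, as a formal power
series in the variables `x_1, x_2, …` (defined coefficientwise). -/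
noncomputable def Lq (q : ℂ) (n : ℕ) (I : Finset ℕ) : MvPowerSeries ℕ ℂ :=
  fun d => ∑ g ∈ Lseqs n I d,
    q ^ (I.filter fun j => fget g j = fget g (j + 1)).card *
      (q + 1) ^ (Finset.image g Finset.univ).card

/-- The weakly increasing sequences of positive integers of length `s` with
`i_j = i_{j+1}` for all `j ∈ I`, with monomial `d`. -/
noncomputable def etaSeqs (s : ℕ) (I : Finset ℕ) (d : ℕ →₀ ℕ) : Finset (Fin s → ℕ) :=
  (Fintype.piFinset fun _ => d.support).filter fun g =>
    (∀ j k : Fin s, j ≤ k → g j ≤ g k) ∧ (∀ j, 1 ≤ g j) ∧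
    (∀ j ∈ I, fget g j = fget g (j + 1)) ∧ monomialOf g = d

/-- The enriched `q`-monomial quasisymmetric function `η^{(q)}_{s,I}`. -/
noncomputable def etaq (q : ℂ) (s : ℕ) (I : Finset ℕ) : MvPowerSeries ℕ ℂ :=
  fun d => ∑ g ∈ etaSeqs s I d, (q + 1) ^ (Finset.image g Finset.univ).card

/-- `I` is a `p`-extended peak set: `I ∪ {0}` contains no `p + 1` consecutive integers. -/
def IsExtPeakSet (p : ℕ) (I : Finset ℕ) : Prop :=
  ∀ a : ℕ, ¬ Finset.Icc a (a + p) ⊆ insert 0 I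

/-- `s^{(p)}_n`: the number of `p`-extended peak subsets of `[n-1]`, with `s^{(p)}_0 = 0`. -/
noncomputable def sCount (p n : ℕ) : ℕ :=
  if n = 0 then 0
  else ((Finset.Icc 1 (n - 1)).powerset.filter fun I => IsExtPeakSet p I).card

/-- The value `π(j)` of the permutation at the (1-indexed) position `j`,
as an element of `{1, …, n}`. -/
def pval {n : ℕ} (π : Equiv.Perm (Fin n)) (j : ℕ) : ℕ :=
  if h : j - 1 < n then (π ⟨j - 1, h⟩ : ℕ) + 1 else 0

/-- The descent set `Des(π) = {1 ≤ i ≤ n-1 : π(i) > π(i+1)}`. -/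
def desSet {n : ℕ} (π : Equiv.Perm (Fin n)) : Finset ℕ :=
  (Finset.Icc 1 (n - 1)).filter fun i => pval π (i + 1) < pval π i

/-- The peak set `Peak(π) = {2 ≤ i ≤ n-1 : π(i-1) < π(i) > π(i+1)}`. -/
def peakSet {n : ℕ} (π : Equiv.Perm (Fin n)) : Finset ℕ :=
  (Finset.Icc 2 (n - 1)).filter fun i =>
    pval π (i - 1) < pval π i ∧ pval π (i + 1) < pval π i

/-- The `p`-extended peak set `Peak_p(π)` of a permutation: the descents `i` such that
`i ≤ p - 1` or some position `i - j` (with `1 ≤ j ≤ p` and `i - j ≥ 1`) is not a descent. -/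
def peakP {n : ℕ} (p : ℕ) (π : Equiv.Perm (Fin n)) : Finset ℕ :=
  (desSet π).filter fun i =>
    i ≤ p - 1 ∨ ∃ j ∈ Finset.Icc 1 p, 1 ≤ i - j ∧ i - j ∉ desSet π

/-- `ρ_p = exp(-iπ(p-1)/(p+1))`. -/
noncomputable def rho (p : ℕ) : ℂ :=
  Complex.exp (-((Real.pi : ℂ) * ((p : ℂ) - 1) / ((p : ℂ) + 1)) * Complex.I)

/-- `[m]_c = 1 + c + ⋯ + c^(m-1)`. -/
noncomputable def qint (m : ℕ) (c : ℂ) : ℂ := ∑ j ∈ Finset.range m, c ^ j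

/-- The entry of the transition matrix `B^{(q)}` at row `J`, column `I`:
`Σ (-q)^{|K|} (q-1)^{|J'|}` over pairs `(J', K)` with `J' ⊆ I`, `K ⊆ Peak(I)`,
`J' ∩ K = ∅` and `J' ∪ (K-1) ∪ K = J`. -/
noncomputable def Bentry (q : ℂ) (J I : Finset ℕ) : ℂ :=
  ∑ J' ∈ I.powerset, ∑ K ∈ (peakOf I).powerset,
    if Disjoint J' K ∧ J' ∪ K.image (· - 1) ∪ K = J then
      (-q) ^ K.card * (q - 1) ^ J'.card
    else 0

/-- The collection of all subsets of `[n-1]` (the empty collection when `n = 0`,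
so that `B_0` is the empty matrix). -/
def subsetsOf (n : ℕ) : Finset (Finset ℕ) :=
  if n = 0 then ∅ else (Finset.Icc 1 (n - 1)).powerset

/-- The matrix `B_n^{(q)}`, with rows and columns indexed by the subsets of `[n-1]`. -/
noncomputable def Bmat (q : ℂ) (n : ℕ) : Matrix ↥(subsetsOf n) ↥(subsetsOf n) ℂ :=
  fun J I => Bentry q J.1 I.1

/-- The entry of `A_n^{(q)}` at row `J'`, column `I'`, namely
`B_n^{(q)}(J' ∪ {n-1}, I' ∪ {n-1})`. -/
noncomputable def Aentry (q : ℂ) (n : ℕ) (J I : Finset ℕ) : ℂ :=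
  Bentry q (insert (n - 1) J) (insert (n - 1) I)

/-- The matrix `A_n^{(q)}`, with rows and columns indexed by the subsets of `[n-2]`. -/
noncomputable def Amat (q : ℂ) (n : ℕ) :
    Matrix ↥(subsetsOf (n - 1)) ↥(subsetsOf (n - 1)) ℂ :=
  fun J I => Aentry q n J.1 I.1

/-- The dimension of the kernel of (the linear map associated with) `B_n^{(q)}`. -/
noncomputable def dimKer (q : ℂ) (n : ℕ) : ℕ :=
  Module.finrank ℂ (LinearMap.ker (Matrix.mulVecLin (Bmat q n)))

/-- For `n ≥ p + 1`, `0 ≤ i ≤ n - 1 - p` and `J ⊆ [n-1]` with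
`{i+1, …, i+p+1} ∩ J = ∅` and `i ∈ J ∪ {0}`, one has
`Σ_{I ⊆ {i+1,…,i+p}} (-1)^{|I|} L^{(ρ_p)}_{n, I ∪ J} = 0`. -/
lemma rho_eq (p : ℕ) : rho p = Complex.exp (((-(Real.pi * ((p:ℝ)-1) / ((p:ℝ)+1)) : ℝ) : ℂ) * Complex.I) := by
  unfold rho; push_cast; ring_nf

lemma rho_ne_neg_one (p : ℕ) (hp : 1 ≤ p) : rho p ≠ -1 := by
  rw [rho_eq]
  intro h
  set θ : ℝ := -(Real.pi * ((p:ℝ)-1) / ((p:ℝ)+1)) with hθ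
  have hre : Real.cos θ = -1 := by
    have := congrArg Complex.re h
    simpa [Complex.exp_ofReal_mul_I_re] using this
  obtain ⟨k, hk⟩ := Real.cos_eq_neg_one_iff.1 hre
  have hpi := Real.pi_pos
  have hp1 : (1:ℝ) ≤ (p:ℝ) := by exact_mod_cast hp
  have hrw : Real.pi * ((p:ℝ)-1) / ((p:ℝ)+1) = Real.pi * (((p:ℝ)-1)/((p:ℝ)+1)) := by ring
  have h1 : ((p:ℝ)-1) / ((p:ℝ)+1) < 1 := by
    rw [div_lt_one (by linarith)]; linarith
  have h2 : 0 ≤ ((p:ℝ)-1) / ((p:ℝ)+1) := div_nonneg (by linarith) (by linarith)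
  have hθ1 : -Real.pi < θ := by
    rw [hθ, hrw]
    nlinarith [mul_lt_mul_of_pos_left h1 hpi]
  have hθ2 : θ ≤ 0 := by
    rw [hθ, hrw]
    nlinarith [mul_nonneg hpi.le h2]
  rcases le_or_gt 0 k with hk0 | hk0
  · have : (0:ℝ) ≤ (k:ℝ) := by exact_mod_cast hk0
    nlinarith
  · have hk1 : k ≤ -1 := by omega
    have : (k:ℝ) ≤ -1 := by exact_mod_cast hk1
    nlinarith

lemma neg_rho_pow (p : ℕ) (hp : 1 ≤ p) : (-rho p) ^ (p+1) = 1 := by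
  obtain ⟨m, rfl⟩ : ∃ m, p = m + 1 := ⟨p - 1, by omega⟩
  have hne : ((m:ℂ) + 1 + 1) ≠ 0 := by
    have h0 : (0:ℝ) < (m:ℝ) + 1 + 1 := by positivity
    intro h
    have := congrArg Complex.re h
    push_cast at this; simp at this; linarith
  have hpow : rho (m+1) ^ (m+1+1) = (-1) ^ m := by
    rw [rho, ← Complex.exp_nat_mul]
    have : ((m+1+1 : ℕ):ℂ) * (-((Real.pi : ℂ) * (((m+1:ℕ) : ℂ) - 1) / (((m+1:ℕ) : ℂ) + 1)) * Complex.I)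
        = (m : ℕ) * (-(Real.pi : ℂ) * Complex.I) := by
      push_cast
      field_simp
      ring
    rw [this, Complex.exp_nat_mul]
    congr 1
    rw [neg_mul, Complex.exp_neg, Complex.exp_pi_mul_I]
    norm_num
  rw [neg_pow, hpow, ← pow_add]
  have : m + 1 + 1 + m = 2 * (m+1) := by ring
  rw [this, pow_mul]
  norm_num

lemma geom_vanish (p : ℕ) (hp : 1 ≤ p) : ∑ k ∈ Finset.range (p+1), (-rho p)^k = 0 := by
  have h1 := geom_sum_mul (-rho p) (p+1)
  rw [neg_rho_pow p hp, sub_self] at h1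
  rcases mul_eq_zero.1 h1 with h | h
  · exact h
  · exact absurd (by linear_combination -h : rho p = -1) (rho_ne_neg_one p hp)
lemma downclosed (i : ℕ) (I : Finset ℕ) (h : ∀ j ∈ I, i+2 ≤ j → j-1 ∈ I) :
    ∀ d k j, j ∈ I → i+1 ≤ k → k + d = j → k ∈ I := by
  intro d
  induction d with
  | zero =>
      intro k j hj hk he
      have : k = j := by omega
      rwa [this]
  | succ d ih =>
      intro k j hj hk he
      have h1 : k+1 ∈ I := ih (k+1) j hj (by omega) (by omega)
      have h2 := h (k+1) h1 (by omega)
      simpa using h2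

lemma initial_char (p i : ℕ) (I : Finset ℕ) (hsub : I ⊆ Finset.Icc (i+1) (i+p))
    (hdc : ∀ j ∈ I, i+2 ≤ j → j-1 ∈ I) :
    ∃ r < p + 1, Finset.Icc (i+1) (i+r) = I := by
  by_cases hI : I = ∅
  · exact ⟨0, by omega, by rw [hI]; apply Icc_eq_empty; omega⟩
  · have hne : I.Nonempty := nonempty_of_ne_empty hI
    set M := I.max' hne with hM
    have hMI : M ∈ I := I.max'_mem hne
    have hMb := mem_Icc.1 (hsub hMI)
    refine ⟨M - i, by omega, ?_⟩
    have hMi : i + (M - i) = M := by omega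
    rw [hMi]
    symm
    ext k
    simp only [mem_Icc]
    constructor
    · intro hk
      exact ⟨(mem_Icc.1 (hsub hk)).1, I.le_max' k hk⟩
    · rintro ⟨hk1, hk2⟩
      exact downclosed i I hdc (M - k) k M hMI hk1 (by omega)

lemma core (p i : ℕ) (q : ℂ)
    (hq : ∑ k ∈ Finset.range (p+1), (-q)^k = 0)
    (f : ℕ → ℕ) (hmono : ∀ k, i+1 ≤ k → k ≤ i+p → f k ≤ f (k+1)) :
    ∑ I ∈ (Finset.Icc (i+1) (i+p)).powerset,
      (-1:ℂ)^I.card *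
        (if ∀ j ∈ I, i+2 ≤ j → j-1 ∉ I → f (j-1) < f (j+1)
         then q ^ (I.filter fun j => f j = f (j+1)).card else 0) = 0 := by
  by_cases hall : ∀ k ∈ Finset.Icc (i+1) (i+p), f k = f (k+1)
  · -- all plateaus: only initial intervals survive, geometric sum
    have htrans : ∀ I ∈ (Finset.Icc (i+1) (i+p)).powerset,
        (-1:ℂ)^I.card *
          (if ∀ j ∈ I, i+2 ≤ j → j-1 ∉ I → f (j-1) < f (j+1)
           then q ^ (I.filter fun j => f j = f (j+1)).card else 0)
        = if ∀ j ∈ I, i+2 ≤ j → j-1 ∈ I then (-q) ^ I.card else 0 := by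
      intro I hI
      rw [mem_powerset] at hI
      have hfilter : (I.filter fun j => f j = f (j+1)) = I :=
        filter_true_of_mem (fun j hj => hall j (hI hj))
      have hiff : (∀ j ∈ I, i+2 ≤ j → j-1 ∉ I → f (j-1) < f (j+1)) ↔
          (∀ j ∈ I, i+2 ≤ j → j-1 ∈ I) := by
        constructor
        · intro h j hj hij
          by_contra hni
          have hjI := mem_Icc.1 (hI hj)
          have e1 : f (j-1) = f j := by
            have := hall (j-1) (mem_Icc.2 (by omega))
            have hj1 : j - 1 + 1 = j := by omega
            rwa [hj1] at this
          have e2 : f j = f (j+1) := hall j (hI hj)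
          exact absurd (h j hj hij hni) (by rw [e1, e2]; exact lt_irrefl _)
        · intro h j hj hij hj1
          exact absurd (h j hj hij) hj1
      rw [hfilter, if_congr hiff rfl rfl]
      split_ifs with h
      · rw [← neg_one_mul q, mul_pow]
      · ring
    rw [Finset.sum_congr rfl htrans]
    have hinj : ∀ r ∈ Finset.range (p+1), ∀ s ∈ Finset.range (p+1),
        Finset.Icc (i+1) (i+r) = Finset.Icc (i+1) (i+s) → r = s := by
      intro r hr s hs he
      have := congrArg Finset.card he
      rw [Nat.card_Icc, Nat.card_Icc] at this
      omega
    have himsub : (Finset.range (p+1)).image (fun r => Finset.Icc (i+1) (i+r))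
        ⊆ (Finset.Icc (i+1) (i+p)).powerset := by
      intro I hI
      obtain ⟨r, hr, rfl⟩ := mem_image.1 hI
      rw [mem_range] at hr
      exact mem_powerset.2 (Icc_subset_Icc le_rfl (by omega))
    have hzero : ∀ I ∈ (Finset.Icc (i+1) (i+p)).powerset,
        I ∉ (Finset.range (p+1)).image (fun r => Finset.Icc (i+1) (i+r)) →
        (if ∀ j ∈ I, i+2 ≤ j → j-1 ∈ I then (-q : ℂ) ^ I.card else 0) = 0 := by
      intro I hI hnotin
      rw [if_neg]
      intro hdc
      obtain ⟨r, hr, he⟩ := initial_char p i I (mem_powerset.1 hI) hdc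
      exact hnotin (mem_image.2 ⟨r, mem_range.2 hr, he⟩)
    rw [← Finset.sum_subset himsub hzero, Finset.sum_image hinj, ← hq]
    apply Finset.sum_congr rfl
    intro r hr
    rw [mem_range] at hr
    rw [if_pos]
    · congr 1
      rw [Nat.card_Icc]
      omega
    · intro j hj hij
      rw [mem_Icc] at hj ⊢
      omega
  · -- there is a strict rise; sign-reversing involution toggling the largest one
    push_neg at hall
    set T := (Finset.Icc (i+1) (i+p)).filter (fun k => ¬ f k = f (k+1)) with hT
    have hTne : T.Nonempty := by
      obtain ⟨k, hk1, hk2⟩ := hall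
      exact ⟨k, mem_filter.2 ⟨hk1, hk2⟩⟩
    set m := T.max' hTne with hm
    have hmT : m ∈ T := T.max'_mem hTne
    have hmIcc : m ∈ Finset.Icc (i+1) (i+p) := (mem_filter.1 hmT).1
    have hmne : ¬ f m = f (m+1) := (mem_filter.1 hmT).2
    have hmb := mem_Icc.1 hmIcc
    have hfm : f m < f (m+1) := lt_of_le_of_ne (hmono m hmb.1 hmb.2) hmne
    have hmax : ∀ k, m < k → k ≤ i + p → f k = f (k+1) := by
      intro k h1 h2
      by_contra hc
      have hk : k ∈ T := mem_filter.2 ⟨mem_Icc.2 ⟨by omega, h2⟩, hc⟩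
      have := T.le_max' k hk
      omega
    have key : ∀ I, I ⊆ Finset.Icc (i+1) (i+p) → m ∉ I →
        ((-1:ℂ)^I.card *
          (if ∀ j ∈ I, i+2 ≤ j → j-1 ∉ I → f (j-1) < f (j+1)
           then q ^ (I.filter fun j => f j = f (j+1)).card else 0)) +
        ((-1:ℂ)^(insert m I).card *
          (if ∀ j ∈ insert m I, i+2 ≤ j → j-1 ∉ insert m I → f (j-1) < f (j+1)
           then q ^ ((insert m I).filter fun j => f j = f (j+1)).card else 0)) = 0 := by
      intro I hIsub hmI
      have hcard : (insert m I).card = I.card + 1 := card_insert_of_notMem hmI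
      have hfil : ((insert m I).filter fun j => f j = f (j+1))
          = I.filter fun j => f j = f (j+1) := by
        rw [filter_insert, if_neg hmne]
      have hiff : (∀ j ∈ insert m I, i+2 ≤ j → j-1 ∉ insert m I → f (j-1) < f (j+1)) ↔
          (∀ j ∈ I, i+2 ≤ j → j-1 ∉ I → f (j-1) < f (j+1)) := by
        constructor
        · intro h j hj hij hj1
          by_cases hjm : j - 1 = m
          · have hj2 : j = m + 1 := by omega
            have hjle : j ≤ i + p := (mem_Icc.1 (hIsub hj)).2
            have heq : f (m+1) = f (m+1+1) := hmax (m+1) (by omega) (by omega)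
            have hje : f (j-1) = f m := by rw [hjm]
            rw [hje, hj2]
            calc f m < f (m+1) := hfm
              _ = f (m+1+1) := heq
          · refine h j (mem_insert_of_mem hj) hij ?_
            intro hc
            rcases mem_insert.1 hc with h' | h'
            · exact hjm h'
            · exact hj1 h'
        · intro h j hj hij hj1
          rcases mem_insert.1 hj with h' | hj'
          · subst h'
            have h2 := hmono (m-1) (by omega) (by omega)
            have hjj : m - 1 + 1 = m := by omega
            rw [hjj] at h2
            exact lt_of_le_of_lt h2 hfm
          · exact h j hj' hij (fun hc => hj1 (mem_insert_of_mem hc))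
      rw [hcard, hfil, if_congr hiff rfl rfl]
      split_ifs with h
      · rw [pow_succ]; ring
      · ring
    refine Finset.sum_involution (fun I _ => if m ∈ I then I.erase m else insert m I)
      ?_ ?_ ?_ ?_
    · intro I hI
      rw [mem_powerset] at hI
      by_cases hmI : m ∈ I
      · rw [if_pos hmI]
        have h1 := key (I.erase m) ((erase_subset m I).trans hI) (notMem_erase m I)
        rw [insert_erase hmI] at h1
        linear_combination h1
      · rw [if_neg hmI]
        exact key I hI hmI
    · intro I hI _
      split_ifs with hmI
      · exact erase_ne_self.2 hmI
      · exact insert_ne_self.2 hmI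
    · intro I hI
      rw [mem_powerset] at hI
      split_ifs with hmI
      · exact mem_powerset.2 ((erase_subset m I).trans hI)
      · exact mem_powerset.2 (insert_subset hmIcc hI)
    · intro I hI
      by_cases hmI : m ∈ I
      · rw [if_pos hmI, if_neg (notMem_erase m I), insert_erase hmI]
      · rw [if_neg hmI, if_pos (mem_insert_self m I), erase_insert hmI]

lemma peak_union (p i : ℕ) (I J : Finset ℕ) (hIsub : I ⊆ Finset.Icc (i+1) (i+p))
    (hJdisj : Disjoint (Finset.Icc (i+1) (i+p+1)) J) (hiJ : i ∈ J ∨ i = 0) :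
    peakOf (I ∪ J) = peakOf J ∪ I.filter (fun j => i+2 ≤ j ∧ j-1 ∉ I) := by
  ext j
  simp only [peakOf, mem_filter, mem_union, not_or]
  constructor
  · rintro ⟨hmem, hj2, hj1I, hj1J⟩
    rcases hmem with hjI | hjJ
    · right
      have hb := mem_Icc.1 (hIsub hjI)
      have hij : i + 2 ≤ j := by
        rcases hiJ with hiJ' | hiJ'
        · by_contra hc
          have he : j - 1 = i := by omega
          exact hj1J (he ▸ hiJ')
        · omega
      exact ⟨hjI, hij, hj1I⟩
    · exact Or.inl ⟨hjJ, hj2, hj1J⟩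
  · rintro (⟨hjJ, hj2, hj1J⟩ | ⟨hjI, hij, hj1I⟩)
    · refine ⟨Or.inr hjJ, hj2, ?_, hj1J⟩
      intro hc
      have hb := mem_Icc.1 (hIsub hc)
      exact disjoint_left.1 hJdisj (mem_Icc.2 ⟨by omega, by omega⟩) hjJ
    · have hb := mem_Icc.1 (hIsub hjI)
      refine ⟨Or.inl hjI, by omega, hj1I, ?_⟩
      intro hc
      exact disjoint_left.1 hJdisj (mem_Icc.2 ⟨by omega, by omega⟩) hc

theorem alternating_sum_extended_peak_vanishes (n p : ℕ) (hp : 1 ≤ p) (hn : p + 1 ≤ n)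
    (i : ℕ) (hi : i ≤ n - 1 - p) (J : Finset ℕ) (hJ : J ⊆ Finset.Icc 1 (n - 1))
    (hJdisj : Disjoint (Finset.Icc (i + 1) (i + p + 1)) J)
    (hiJ : i ∈ J ∨ i = 0) :
    ∑ I ∈ (Finset.Icc (i + 1) (i + p)).powerset,
      ((-1 : ℂ) ^ I.card) • Lq (rho p) n (I ∪ J) = 0 := by
  classical
  have hq : ∑ k ∈ Finset.range (p+1), (-(rho p))^k = 0 := geom_vanish p hp
  apply MvPowerSeries.ext
  intro d
  rw [map_sum, map_zero]
  have step1 : ∀ I ∈ (Finset.Icc (i + 1) (i + p)).powerset,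
      (MvPowerSeries.coeff d) (((-1 : ℂ) ^ I.card) • Lq (rho p) n (I ∪ J))
      = ∑ g ∈ Fintype.piFinset (fun _ : Fin n => d.support),
          (-1 : ℂ) ^ I.card *
          (if (∀ j k : Fin n, j ≤ k → g j ≤ g k) ∧ (∀ j, 1 ≤ g j) ∧
              (∀ j ∈ peakOf (I ∪ J), fget g (j - 1) < fget g (j + 1)) ∧ monomialOf g = d
           then rho p ^ ((I ∪ J).filter fun j => fget g j = fget g (j + 1)).card *
              (rho p + 1) ^ (Finset.image g Finset.univ).card
           else 0) := by
    intro I _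
    rw [map_smul, smul_eq_mul]
    have h1 : (MvPowerSeries.coeff d) (Lq (rho p) n (I ∪ J))
        = ∑ g ∈ Lseqs n (I ∪ J) d,
            rho p ^ ((I ∪ J).filter fun j => fget g j = fget g (j + 1)).card *
              (rho p + 1) ^ (Finset.image g Finset.univ).card := rfl
    rw [h1, Lseqs, Finset.sum_filter, Finset.mul_sum]
  rw [Finset.sum_congr rfl step1, Finset.sum_comm]
  apply Finset.sum_eq_zero
  intro g _
  by_cases hbase : (∀ j k : Fin n, j ≤ k → g j ≤ g k) ∧ (∀ j, 1 ≤ g j) ∧ monomialOf g = d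
  · obtain ⟨hmonot, hpos, hmon⟩ := hbase
    by_cases hA : ∀ j ∈ peakOf J, fget g (j - 1) < fget g (j + 1)
    · have hbound : i + p + 1 ≤ n := by omega
      have hmono' : ∀ k, i+1 ≤ k → k ≤ i+p → fget g k ≤ fget g (k+1) := by
        intro k h1 h2
        have hk1 : k - 1 < n := by omega
        have hk2 : k + 1 - 1 < n := by omega
        unfold fget
        rw [dif_pos hk1, dif_pos hk2]
        exact hmonot ⟨k-1, hk1⟩ ⟨k+1-1, hk2⟩ (by simp only [Fin.mk_le_mk]; omega)
      have step2 : ∀ I ∈ (Finset.Icc (i + 1) (i + p)).powerset,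
          ((-1 : ℂ) ^ I.card *
          (if (∀ j k : Fin n, j ≤ k → g j ≤ g k) ∧ (∀ j, 1 ≤ g j) ∧
              (∀ j ∈ peakOf (I ∪ J), fget g (j - 1) < fget g (j + 1)) ∧ monomialOf g = d
           then rho p ^ ((I ∪ J).filter fun j => fget g j = fget g (j + 1)).card *
              (rho p + 1) ^ (Finset.image g Finset.univ).card
           else 0))
          = ((-1 : ℂ) ^ I.card *
              (if ∀ j ∈ I, i+2 ≤ j → j-1 ∉ I → fget g (j-1) < fget g (j+1)
               then rho p ^ (I.filter fun j => fget g j = fget g (j + 1)).card else 0)) *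
            (rho p ^ (J.filter fun j => fget g j = fget g (j + 1)).card *
              (rho p + 1) ^ (Finset.image g Finset.univ).card) := by
        intro I hI
        rw [mem_powerset] at hI
        have hIJd : Disjoint I J := by
          rw [Finset.disjoint_left]
          intro a ha haJ
          have hb := mem_Icc.1 (hI ha)
          exact disjoint_left.1 hJdisj (mem_Icc.2 ⟨by omega, by omega⟩) haJ
        have hsplit : ((I ∪ J).filter fun j => fget g j = fget g (j + 1)).card
            = (I.filter fun j => fget g j = fget g (j + 1)).card
              + (J.filter fun j => fget g j = fget g (j + 1)).card := by
          rw [filter_union, card_union_of_disjoint (disjoint_filter_filter hIJd)]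
        have hpk : (∀ j ∈ peakOf (I ∪ J), fget g (j-1) < fget g (j+1)) ↔
            (∀ j ∈ I, i+2 ≤ j → j-1 ∉ I → fget g (j-1) < fget g (j+1)) := by
          rw [peak_union p i I J hI hJdisj hiJ]
          constructor
          · intro h j hj hij hj1
            exact h j (mem_union_right _ (mem_filter.2 ⟨hj, hij, hj1⟩))
          · intro h j hj
            rcases mem_union.1 hj with hj' | hj'
            · exact hA j hj'
            · obtain ⟨h1, h2, h3⟩ := mem_filter.1 hj'
              exact h j h1 h2 h3
        by_cases hc : ∀ j ∈ I, i+2 ≤ j → j-1 ∉ I → fget g (j-1) < fget g (j+1)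
        · rw [if_pos hc, if_pos ⟨hmonot, hpos, hpk.2 hc, hmon⟩, hsplit, pow_add]
          ring
        · rw [if_neg hc, if_neg (fun hfull => hc (hpk.1 hfull.2.2.1))]
          ring
      rw [Finset.sum_congr rfl step2, ← Finset.sum_mul,
        core p i (rho p) hq (fget g) hmono', zero_mul]
    · apply Finset.sum_eq_zero
      intro I hI
      rw [if_neg, mul_zero]
      rintro ⟨_, _, h3, _⟩
      apply hA
      intro j hj
      apply h3
      rw [peak_union p i I J (mem_powerset.1 hI) hJdisj hiJ]
      exact mem_union_left _ hj
  · apply Finset.sum_eq_zero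
    intro I _
    rw [if_neg, mul_zero]
    rintro ⟨h1, h2, _, h4⟩
    exact hbase ⟨h1, h2, h4⟩

end ExtPeaks
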